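/- Let ∑_{n=0}^∞ a_n be a series of real numbers with a_0 ≤ 0, such that a_n > 0 for infinitely many n and a_n ≤ 0 for infinitely many n. Suppose σ_1 and σ_2 are type R λ-permutations of the series, with bounded block numbers C_1 and C_2 respectively, such that ∑_{n=0}^∞ a_{σ_1(n)} = r_1, ∑_{n=0}^∞ a_{σ_2(n)} = r_2, and r_1 > r_2. Let C = max(C_1, C_2). Then there exists k_0 ∈ ℕ such that for all i > k_0, S_{[N_{i+1}, N_{i+2C−1}]} < −(r_1 − r_2)/2; in particular the series satisfies ST_N. -/

import Mathlib

open Filter Finset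

noncomputable section
open scoped Classical

/-- Partial sum of the series `∑ a n`: sum of the first `n` terms. -/
def partialSum (a : ℕ → ℝ) (n : ℕ) : ℝ := ∑ i ∈ Finset.range n, a i

/-- The series `∑ a n` converges to `L`. -/
def ConvergesTo (a : ℕ → ℝ) (L : ℝ) : Prop :=
  Filter.Tendsto (partialSum a) Filter.atTop (nhds L)

/-- The series `∑ a n` converges. -/
def Converges (a : ℕ → ℝ) : Prop := ∃ L : ℝ, ConvergesTo a L

/-- The series `∑ a n` is conditionally divergent: it diverges, but some
rearrangement of it converges. -/
def CondDivergent (a : ℕ → ℝ) : Prop :=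
  ¬ Converges a ∧ ∃ σ : Equiv.Perm ℕ, Converges (fun n => a (σ n))

/-- `σ` is a type R permutation of the series `∑ a n`: it preserves the relative
order of terms of the same sign. -/
def IsTypeR (a : ℕ → ℝ) (σ : Equiv.Perm ℕ) : Prop :=
  ∀ i j : ℕ, σ i < σ j →
    ((0 < a (σ i) ∧ 0 < a (σ j)) ∨ (a (σ i) ≤ 0 ∧ a (σ j) ≤ 0)) → i < j

/-- The number of maximal integer intervals whose union is the finite set `s`
(= the number of `x ∈ s` with `x + 1 ∉ s`). -/
def blockCount (s : Finset ℕ) : ℕ := (s.filter (fun x => x + 1 ∉ s)).card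

/-- `σ` has bounded block number `C`: at every stage `n`, the set
`σ '' {0, 1, …, n}` is a union of at most `C` maximal integer intervals. -/
def HasBBN (σ : Equiv.Perm ℕ) (C : ℕ) : Prop :=
  ∀ n : ℕ, blockCount ((Finset.range (n + 1)).image σ) ≤ C

/-- `σ` is a type R λ-permutation of the series `∑ a n`: a type R permutation
with bounded block number whose rearranged series converges. -/
def IsTypeRLambda (a : ℕ → ℝ) (σ : Equiv.Perm ℕ) : Prop :=
  IsTypeR a σ ∧ (∃ C : ℕ, HasBBN σ C) ∧ Converges (fun n => a (σ n))

/-- The set of sums attainable by type R λ-permutations of `∑ a n`. -/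
def ZR (a : ℕ → ℝ) : Set ℝ :=
  {r : ℝ | ∃ σ : Equiv.Perm ℕ, IsTypeRLambda a σ ∧ ConvergesTo (fun n => a (σ n)) r}

/-- The first element `p_i` of the `i`-th positive block `P_i` (blocks 1-indexed):
the `i`-th index `n` with `a n > 0` which starts a maximal interval of positive terms. -/
def posStartIdx (a : ℕ → ℝ) (i : ℕ) : ℕ :=
  Nat.nth (fun n => 0 < a n ∧ (n = 0 ∨ a (n - 1) ≤ 0)) (i - 1)

/-- The last element `q_i` of the `i`-th positive block `P_i` (blocks 1-indexed). -/
def posEndIdx (a : ℕ → ℝ) (i : ℕ) : ℕ :=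
  Nat.nth (fun n => 0 < a n ∧ a (n + 1) ≤ 0) (i - 1)

/-- The first element `n_i` of the `i`-th negative block `N_i` (blocks 1-indexed). -/
def negStartIdx (a : ℕ → ℝ) (i : ℕ) : ℕ :=
  Nat.nth (fun n => a n ≤ 0 ∧ (n = 0 ∨ 0 < a (n - 1))) (i - 1)

/-- The last element `m_i` of the `i`-th negative block `N_i` (blocks 1-indexed). -/
def negEndIdx (a : ℕ → ℝ) (i : ℕ) : ℕ :=
  Nat.nth (fun n => a n ≤ 0 ∧ 0 < a (n + 1)) (i - 1)

/-- `S_{[P_i, P_j]}`: the sum of the terms of `∑ a n` lying in the positive blocks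
`P_i ∪ ⋯ ∪ P_j` (interpreted as `0` when `j < i`). -/
def SP (a : ℕ → ℝ) (i j : ℕ) : ℝ :=
  if j < i then 0
  else ∑ n ∈ Finset.Icc (posStartIdx a i) (posEndIdx a j), if 0 < a n then a n else 0

/-- `S_{[N_i, N_j]}`: the sum of the terms of `∑ a n` lying in the negative blocks
`N_i ∪ ⋯ ∪ N_j` (interpreted as `0` when `j < i`). -/
def SN (a : ℕ → ℝ) (i j : ℕ) : ℝ :=
  if j < i then 0
  else ∑ n ∈ Finset.Icc (negStartIdx a i) (negEndIdx a j), if a n ≤ 0 then a n else 0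

/-- The substantial property on positive blocks. -/
def STP (a : ℕ → ℝ) : Prop :=
  ∃ k : ℕ, ∃ ε : ℝ, 0 < ε ∧ ∃ i0 : ℕ, ∀ i > i0, SP a i (i + k) ≥ ε

/-- The substantial property on negative blocks. -/
def STN (a : ℕ → ℝ) : Prop :=
  ∃ k : ℕ, ∃ ε : ℝ, 0 < ε ∧ ∃ i0 : ℕ, ∀ i > i0, SN a i (i + k) ≤ -ε

namespace St5

/-- negative block end -/
def NE (a : ℕ → ℝ) (n : ℕ) : Prop := a n ≤ 0 ∧ 0 < a (n + 1)
/-- negative block start -/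
def NS (a : ℕ → ℝ) (n : ℕ) : Prop := a n ≤ 0 ∧ (n = 0 ∨ 0 < a (n - 1))
/-- positive block end -/
def PE (a : ℕ → ℝ) (n : ℕ) : Prop := 0 < a n ∧ a (n + 1) ≤ 0

variable {a : ℕ → ℝ}

lemma smap_ex (a : ℕ → ℝ) (x : ℕ) : ∃ s, ∀ y, s ≤ y → y ≤ x → a y ≤ 0 :=
  ⟨x + 1, fun y hy hy' => absurd (hy.trans hy') (by omega)⟩

/-- start of the maximal nonpositive run ending at `x` (junk if `a x > 0`). -/
def smap (a : ℕ → ℝ) (x : ℕ) : ℕ := Nat.find (smap_ex a x)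

lemma smap_run {x : ℕ} : ∀ y, smap a x ≤ y → y ≤ x → a y ≤ 0 :=
  Nat.find_spec (smap_ex a x)

lemma smap_le {x : ℕ} (hx : a x ≤ 0) : smap a x ≤ x :=
  Nat.find_min' (smap_ex a x) (fun y hy hy' => by
    have : y = x := le_antisymm hy' hy
    rwa [this])

lemma smap_NS {x : ℕ} (hx : a x ≤ 0) : NS a (smap a x) := by
  refine ⟨smap_run _ le_rfl (smap_le hx), ?_⟩
  rcases Nat.eq_zero_or_pos (smap a x) with h | h
  · exact Or.inl h
  · right
    have hmin : ¬ (∀ y, smap a x - 1 ≤ y → y ≤ x → a y ≤ 0) :=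
      Nat.find_min (smap_ex a x) (show smap a x - 1 < smap a x by omega)
    push_neg at hmin
    obtain ⟨y, hy1, hy2, hy3⟩ := hmin
    have hy4 : y = smap a x - 1 := by
      by_contra hne
      exact absurd (smap_run y (by omega) hy2) (not_le.mpr hy3)
    rw [← hy4]; exact hy3

lemma smap_gt {e x : ℕ} (he : NE a e) (hx : a x ≤ 0) (hex : e < x) :
    e < smap a x := by
  by_contra h
  push_neg at h
  exact absurd (smap_run (e + 1) (by omega) (by omega : e + 1 ≤ x)) (not_le.mpr he.2)

/-- greatest nonpositive index below `e` (junk if none). -/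
def gmap (a : ℕ → ℝ) (e : ℕ) : ℕ :=
  (({x ∈ range e | a x ≤ 0} : Finset ℕ).max).getD 0

section gmap
variable (h0 : a 0 ≤ 0) {e : ℕ} (he : 0 < e)
include h0 he

lemma gmap_spec : gmap a e ∈ ({x ∈ range e | a x ≤ 0} : Finset ℕ) ∧
    ∀ x ∈ ({x ∈ range e | a x ≤ 0} : Finset ℕ), x ≤ gmap a e := by
  have hne : ({x ∈ range e | a x ≤ 0} : Finset ℕ).Nonempty :=
    ⟨0, by simp [h0, he]⟩
  have : gmap a e = ({x ∈ range e | a x ≤ 0} : Finset ℕ).max' hne := by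
    rw [gmap, ← Finset.coe_max' hne]; rfl
  rw [this]
  exact ⟨Finset.max'_mem _ _, fun x hx => Finset.le_max' _ _ hx⟩

lemma gmap_lt : gmap a e < e := by
  have := (gmap_spec h0 he).1
  simp only [Finset.mem_filter, Finset.mem_range] at this
  exact this.1

lemma gmap_neg : a (gmap a e) ≤ 0 := by
  have := (gmap_spec h0 he).1
  simp only [Finset.mem_filter, Finset.mem_range] at this
  exact this.2

lemma gmap_max {x : ℕ} (hx : a x ≤ 0) (hxe : x < e) : x ≤ gmap a e :=
  (gmap_spec h0 he).2 x (by simp [hx, hxe])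

lemma gmap_succ_pos {x : ℕ} (hgx : gmap a e < x) (hxe : x < e) : 0 < a x := by
  by_contra h
  push_neg at h
  exact absurd (gmap_max h0 he h hxe) (not_le.mpr hgx)

end gmap

lemma gmap_NE_of_pos (h0 : a 0 ≤ 0) {e : ℕ} (he : 0 < a e) : NE a (gmap a e) := by
  have he0 : 0 < e := by
    rcases Nat.eq_zero_or_pos e with h | h
    · subst h; exact absurd h0 (not_le.mpr he)
    · exact h
  refine ⟨gmap_neg h0 he0, ?_⟩
  rcases eq_or_lt_of_le (Nat.succ_le_of_lt (gmap_lt h0 he0)) with h | h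
  · have : gmap a e + 1 = e := h
    rwa [this]
  · exact gmap_succ_pos h0 he0 (Nat.lt_succ_self _) h


section counts
variable (h0 : a 0 ≤ 0)
include h0

lemma count_NE_le_count_NS (x : ℕ) : Nat.count (NE a) x ≤ Nat.count (NS a) x := by
  rw [Nat.count_eq_card_filter_range, Nat.count_eq_card_filter_range]
  apply Finset.card_le_card_of_injOn (fun e => smap a e)
  · intro e he
    simp only [Finset.mem_coe, Finset.mem_filter, Finset.mem_range] at he ⊢
    exact ⟨lt_of_le_of_lt (smap_le he.2.1) he.1, smap_NS he.2.1⟩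
  · intro e he e' he' heq
    simp only [Finset.coe_filter, Set.mem_setOf_eq, Finset.mem_range] at he he'
    by_contra hne
    have heq' : smap a e = smap a e' := heq
    rcases lt_or_gt_of_ne hne with h | h
    · exact absurd (heq' ▸ smap_le he.2.1) (not_le.mpr (smap_gt he.2 he'.2.1 h))
    · exact absurd (heq'.symm ▸ smap_le he'.2.1) (not_le.mpr (smap_gt he'.2 he.2.1 h))

lemma count_PE_le_count_NE (x : ℕ) :
    Nat.count (PE a) (x + 1) ≤ Nat.count (NE a) x := by
  rw [Nat.count_eq_card_filter_range, Nat.count_eq_card_filter_range]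
  apply Finset.card_le_card_of_injOn (fun e => gmap a e)
  · intro e he
    simp only [Finset.mem_coe, Finset.mem_filter, Finset.mem_range] at he ⊢
    have he0 : 0 < e := by
      rcases Nat.eq_zero_or_pos e with h | h
      · exact absurd (h ▸ he.2.1) (not_lt.mpr h0)
      · exact h
    exact ⟨lt_of_lt_of_le (gmap_lt h0 he0) (by omega), gmap_NE_of_pos h0 he.2.1⟩
  · intro e he e' he' heq
    simp only [Finset.coe_filter, Set.mem_setOf_eq, Finset.mem_range] at he he'
    by_contra hne
    have key : ∀ u v : ℕ, PE a u → PE a v → u < v → gmap a u < gmap a v := by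
      intro u v hu hv huv
      have hu0 : 0 < u := by
        rcases Nat.eq_zero_or_pos u with h | h
        · exact absurd (h ▸ hu.1) (not_lt.mpr h0)
        · exact h
      have h1 : u + 1 < v := by
        rcases eq_or_lt_of_le (Nat.succ_le_of_lt huv) with h | h
        · exact absurd (h ▸ hu.2) (not_le.mpr hv.1)
        · exact h
      calc gmap a u < u := gmap_lt h0 hu0
        _ < u + 1 := Nat.lt_succ_self _
        _ ≤ gmap a v := gmap_max h0 (by omega) hu.2 h1
    have heq' : gmap a e = gmap a e' := heq
    rcases lt_or_gt_of_ne hne with h | h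
    · exact absurd heq' (ne_of_lt (key _ _ he.2 he'.2 h))
    · exact absurd heq'.symm (ne_of_lt (key _ _ he'.2 he.2 h))

lemma count_NS_le_count_PE (x : ℕ) :
    Nat.count (NS a) (x + 1) ≤ Nat.count (PE a) x + 1 := by
  rw [Nat.count_eq_card_filter_range, Nat.count_eq_card_filter_range]
  set s : Finset ℕ := {n ∈ range (x + 1) | NS a n} with hs
  have h1 : s ⊆ insert 0 (s.erase 0) := by
    intro u hu
    rcases Nat.eq_zero_or_pos u with h | h
    · simp [h]
    · exact Finset.mem_insert_of_mem (Finset.mem_erase.mpr ⟨by omega, hu⟩)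
  have h2 : s.card ≤ (s.erase 0).card + 1 :=
    le_trans (Finset.card_le_card h1) (Finset.card_insert_le _ _)
  refine le_trans h2 (Nat.add_le_add_right ?_ 1)
  apply Finset.card_le_card_of_injOn (fun n => n - 1)
  · intro n hn
    simp only [hs, Finset.mem_coe, Finset.mem_erase, Finset.mem_filter, Finset.mem_range] at hn ⊢
    obtain ⟨hn0, hn1, hn2⟩ := hn
    rcases hn2.2 with h | h
    · exact absurd h hn0
    · exact ⟨by omega, h, by
        have : n - 1 + 1 = n := by omega
        rw [this]; exact hn2.1⟩
  · intro n hn n' hn' heq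
    simp only [hs, Finset.coe_erase, Set.mem_diff, Finset.coe_filter] at hn hn'
    have h1 : n ≠ 0 := by simpa using hn.2
    have h2 : n' ≠ 0 := by simpa using hn'.2
    have heq' : n - 1 = n' - 1 := heq
    omega

lemma NE_infinite (hP : {n : ℕ | 0 < a n}.Infinite)
    (hN : {n : ℕ | a n ≤ 0}.Infinite) : (setOf (NE a)).Infinite := by
  apply Set.infinite_of_forall_exists_gt
  intro K
  obtain ⟨n, hn, hnK⟩ := hN.exists_gt K
  obtain ⟨m, hm, hmn⟩ := hP.exists_gt n
  simp only [Set.mem_setOf_eq] at hn hm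
  refine ⟨gmap a m, gmap_NE_of_pos h0 hm, lt_of_lt_of_le hnK ?_⟩
  exact gmap_max h0 (by omega) hn hmn

lemma NS_infinite (hP : {n : ℕ | 0 < a n}.Infinite)
    (hN : {n : ℕ | a n ≤ 0}.Infinite) : (setOf (NS a)).Infinite := by
  apply Set.infinite_of_forall_exists_gt
  intro K
  obtain ⟨e, he, heK⟩ := (NE_infinite h0 hP hN).exists_gt K
  obtain ⟨z, hz, hze⟩ := hN.exists_gt (e + 1)
  simp only [Set.mem_setOf_eq] at he hz
  exact ⟨smap a z, smap_NS hz, lt_trans heK (smap_gt he hz (by omega))⟩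

lemma PE_infinite (hP : {n : ℕ | 0 < a n}.Infinite)
    (hN : {n : ℕ | a n ≤ 0}.Infinite) : (setOf (PE a)).Infinite := by
  apply Set.infinite_of_forall_exists_gt
  intro K
  obtain ⟨n, hn, hnK⟩ := hP.exists_gt K
  obtain ⟨m, hm, hmn⟩ := hN.exists_gt n
  simp only [Set.mem_setOf_eq] at hn hm
  have hne : ({x ∈ range m | 0 < a x} : Finset ℕ).Nonempty :=
    ⟨n, by simp only [Finset.mem_filter, Finset.mem_range]; exact ⟨hmn, hn⟩⟩
  set g := ({x ∈ range m | 0 < a x} : Finset ℕ).max' hne with hg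
  have hgmem := Finset.max'_mem _ hne
  rw [← hg] at hgmem
  simp only [Finset.mem_filter, Finset.mem_range] at hgmem
  have hgn : n ≤ g := Finset.le_max' _ n
    (by simp only [Finset.mem_filter, Finset.mem_range]; exact ⟨hmn, hn⟩)
  refine ⟨g, ⟨hgmem.2, ?_⟩, lt_of_lt_of_le hnK hgn⟩
  rcases eq_or_lt_of_le (Nat.succ_le_of_lt hgmem.1) with h | h
  · have : g + 1 = m := h
    rw [this]; exact hm
  · by_contra hc
    push_neg at hc
    have h2 := Finset.le_max' ({x ∈ range m | 0 < a x} : Finset ℕ) (g + 1)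
      (by simp only [Finset.mem_filter, Finset.mem_range]; exact ⟨h, hc⟩)
    rw [← hg] at h2
    omega

end counts

section nthfacts
variable (h0 : a 0 ≤ 0) (hP : {n : ℕ | 0 < a n}.Infinite)
  (hN : {n : ℕ | a n ≤ 0}.Infinite)
include h0 hP hN

lemma NE_lt_PE (k : ℕ) : Nat.nth (NE a) k < Nat.nth (PE a) k := by
  have hPEi := PE_infinite h0 hP hN
  have hNEi := NE_infinite h0 hP hN
  have h1 : Nat.count (PE a) (Nat.nth (PE a) k + 1) = k + 1 := by
    rw [Nat.count_succ, Nat.count_nth_of_infinite hPEi,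
      if_pos (Nat.nth_mem_of_infinite hPEi k)]
  have h2 := count_PE_le_count_NE h0 (x := Nat.nth (PE a) k)
  rw [h1] at h2
  exact (Nat.lt_nth_iff_count_lt hNEi).mp (by omega)

lemma NS_le_NE (k : ℕ) : Nat.nth (NS a) k ≤ Nat.nth (NE a) k := by
  have hNSi := NS_infinite h0 hP hN
  have hNEi := NE_infinite h0 hP hN
  have h1 : Nat.count (NE a) (Nat.nth (NE a) k + 1) = k + 1 := by
    rw [Nat.count_succ, Nat.count_nth_of_infinite hNEi,
      if_pos (Nat.nth_mem_of_infinite hNEi k)]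
  have h2 := count_NE_le_count_NS (a := a) h0 (Nat.nth (NE a) k + 1)
  rw [h1] at h2
  have := (Nat.lt_nth_iff_count_lt hNSi (a := k) (b := Nat.nth (NE a) k + 1)).mp
    (by omega)
  omega

lemma PE_lt_NS (k : ℕ) : Nat.nth (PE a) k < Nat.nth (NS a) (k + 1) := by
  have hNSi := NS_infinite h0 hP hN
  have hPEi := PE_infinite h0 hP hN
  have h1 : Nat.count (NS a) (Nat.nth (NS a) (k + 1) + 1) = k + 2 := by
    rw [Nat.count_succ, Nat.count_nth_of_infinite hNSi,
      if_pos (Nat.nth_mem_of_infinite hNSi (k + 1))]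
  have h2 := count_NS_le_count_PE (a := a) h0 (x := Nat.nth (NS a) (k + 1))
  rw [h1] at h2
  exact (Nat.lt_nth_iff_count_lt hPEi).mp (by omega)

lemma NE_lt_NS (k : ℕ) : Nat.nth (NE a) k < Nat.nth (NS a) (k + 1) :=
  lt_trans (NE_lt_PE h0 hP hN k) (PE_lt_NS h0 hP hN k)

/-- A nonpositive index exceeds the `k`-th negative-block end iff it is at least
the `(k+1)`-st negative-block start. -/
lemma F1 (k : ℕ) {x : ℕ} (hx : a x ≤ 0) :
    Nat.nth (NE a) k < x ↔ Nat.nth (NS a) (k + 1) ≤ x := by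
  have hNSi := NS_infinite h0 hP hN
  have hNEi := NE_infinite h0 hP hN
  constructor
  · intro h
    have hE := Nat.nth_mem_of_infinite hNEi k
    have hs : Nat.nth (NE a) k < smap a x := smap_gt hE hx h
    have hc : k + 1 ≤ Nat.count (NS a) (smap a x) := by
      have h1 : Nat.count (NE a) (Nat.nth (NE a) k + 1) = k + 1 := by
        rw [Nat.count_succ, Nat.count_nth_of_infinite hNEi, if_pos hE]
      have h2 := count_NE_le_count_NS (a := a) h0 (Nat.nth (NE a) k + 1)
      have h3 : Nat.count (NS a) (Nat.nth (NE a) k + 1) ≤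
          Nat.count (NS a) (smap a x) := Nat.count_monotone _ (by omega)
      omega
    calc Nat.nth (NS a) (k + 1) ≤ Nat.nth (NS a) (Nat.count (NS a) (smap a x)) :=
          (Nat.nth_le_nth hNSi).mpr hc
      _ = smap a x := Nat.nth_count (smap_NS hx)
      _ ≤ x := smap_le hx
  · intro h
    exact lt_of_lt_of_le (NE_lt_NS h0 hP hN k) h

end nthfacts

end St5


namespace St5

variable {a : ℕ → ℝ}

/-- cumulative sum of nonpositive terms over `[0, x)`. -/
def G (a : ℕ → ℝ) (x : ℕ) : ℝ := ∑ n ∈ Finset.range x, if a n ≤ 0 then a n else 0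

lemma G_mono {x y : ℕ} (hxy : x ≤ y) : G a y ≤ G a x := by
  unfold G
  rw [Finset.range_eq_Ico, ← Finset.sum_Ico_consecutive _ (Nat.zero_le x) hxy,
    ← Finset.range_eq_Ico]
  have : ∑ n ∈ Finset.Ico x y, (if a n ≤ 0 then a n else 0) ≤ 0 :=
    Finset.sum_nonpos (fun n _ => by split <;> simp_all)
  linarith

lemma G_le_sum {x : ℕ} {T : Finset ℕ} (hneg : ∀ z ∈ T, a z ≤ 0)
    (hsub : T ⊆ Finset.range x) : G a x ≤ ∑ z ∈ T, a z := by
  unfold G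
  rw [← Finset.sum_sdiff hsub]
  have h1 : ∑ n ∈ Finset.range x \ T, (if a n ≤ 0 then a n else 0) ≤ 0 :=
    Finset.sum_nonpos (fun n _ => by split <;> simp_all)
  have h2 : ∑ n ∈ T, (if a n ≤ 0 then a n else 0) = ∑ z ∈ T, a z :=
    Finset.sum_congr rfl (fun z hz => if_pos (hneg z hz))
  linarith

section snform
variable (h0 : a 0 ≤ 0) (hP : {n : ℕ | 0 < a n}.Infinite)
  (hN : {n : ℕ | a n ≤ 0}.Infinite)
include h0 hP hN

lemma SN_formula (b j : ℕ) (hbj : b + 1 ≤ j) :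
    SN a (b + 2) (j + 1) =
      G a (Nat.nth (NE a) j + 1) - G a (Nat.nth (NE a) b + 1) := by
  have e1 : negStartIdx a (b + 2) = Nat.nth (NS a) (b + 1) := rfl
  have e2 : negEndIdx a (j + 1) = Nat.nth (NE a) j := rfl
  rw [SN, if_neg (by omega), e1, e2]
  set s := Nat.nth (NS a) (b + 1) with hs
  set e := Nat.nth (NE a) j with he
  set mb := Nat.nth (NE a) b with hmb
  have hmbs : mb + 1 ≤ s := NE_lt_NS h0 hP hN b
  have hse : s ≤ e + 1 := by
    have h1 : s ≤ Nat.nth (NE a) (b + 1) := NS_le_NE h0 hP hN (b + 1)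
    have h2 : Nat.nth (NE a) (b + 1) ≤ e :=
      Nat.nth_monotone (NE_infinite h0 hP hN) hbj
    omega
  have key : G a (e + 1) = G a s + ∑ n ∈ Finset.Icc s e, (if a n ≤ 0 then a n else 0) := by
    rw [← Finset.Ico_add_one_right_eq_Icc]
    unfold G
    rw [Finset.range_eq_Ico,
      ← Finset.sum_Ico_consecutive (fun n => if a n ≤ 0 then a n else 0)
        (Nat.zero_le s) hse, Finset.range_eq_Ico]
  have key2 : G a s = G a (mb + 1) := by
    unfold G
    rw [Finset.range_eq_Ico,
      ← Finset.sum_Ico_consecutive (fun n => if a n ≤ 0 then a n else 0)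
        (Nat.zero_le (mb + 1)) hmbs]
    have : ∑ n ∈ Finset.Ico (mb + 1) s, (if a n ≤ 0 then a n else 0) = 0 := by
      apply Finset.sum_eq_zero
      intro y hy
      simp only [Finset.mem_Ico] at hy
      rw [if_neg]
      intro hya
      exact absurd ((F1 h0 hP hN b hya).mp (by omega)) (by omega)
    rw [this, add_zero, Finset.range_eq_Ico]
  rw [key, key2]
  ring

end snform

section perm
variable {σ : Equiv.Perm ℕ}

lemma sum_stage (σ : Equiv.Perm ℕ) (n : ℕ) :
    partialSum (fun k => a (σ k)) (n + 1) = ∑ z ∈ (Finset.range (n + 1)).image σ, a z := by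
  rw [partialSum, Finset.sum_image (fun x _ y _ h => σ.injective h)]

lemma prefix_closed (hR : IsTypeR a σ) {n z w : ℕ}
    (hz : z ∈ (Finset.range (n + 1)).image σ)
    (hsign : (0 < a w ∧ 0 < a z) ∨ (a w ≤ 0 ∧ a z ≤ 0)) (hwz : w ≤ z) :
    w ∈ (Finset.range (n + 1)).image σ := by
  rcases eq_or_lt_of_le hwz with h | h
  · rwa [h]
  · simp only [Finset.mem_image, Finset.mem_range] at hz ⊢
    obtain ⟨k, hk, hkz⟩ := hz
    by_contra hcon
    push_neg at hcon
    have hkw : σ (σ.symm w) = w := σ.apply_symm_apply w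
    have hcon' : n + 1 ≤ σ.symm w := by
      by_contra hc
      push_neg at hc
      exact hcon (σ.symm w) hc hkw
    have := hR (σ.symm w) k (by rw [hkw, hkz]; exact h)
      (by rw [hkw, hkz]; exact hsign)
    omega

lemma stage_bound (hR : IsTypeR a σ) {x z : ℕ}
    (hz : z ∈ (Finset.range (σ.symm x + 1)).image σ)
    (hsign : (0 < a x ∧ 0 < a z) ∨ (a x ≤ 0 ∧ a z ≤ 0)) : z ≤ x := by
  simp only [Finset.mem_image, Finset.mem_range] at hz
  obtain ⟨k, hk, hkz⟩ := hz
  by_contra hc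
  push_neg at hc
  have hkw : σ (σ.symm x) = x := σ.apply_symm_apply x
  have := hR (σ.symm x) k (by rw [hkw, hkz]; exact hc)
    (by rw [hkw, hkz]; exact hsign)
  omega

lemma neg_part_eq (hR : IsTypeR a σ) {x : ℕ} (hx : a x ≤ 0) :
    ((Finset.range (σ.symm x + 1)).image σ).filter (fun z => a z ≤ 0) =
      (Finset.range (x + 1)).filter (fun z => a z ≤ 0) := by
  ext z
  simp only [Finset.mem_filter, Finset.mem_range]
  constructor
  · intro ⟨h1, h2⟩
    exact ⟨Nat.lt_succ_of_le (stage_bound hR h1 (Or.inr ⟨hx, h2⟩)), h2⟩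
  · intro ⟨h1, h2⟩
    have hxmem : x ∈ (Finset.range (σ.symm x + 1)).image σ := by
      simp only [Finset.mem_image, Finset.mem_range]
      exact ⟨σ.symm x, Nat.lt_succ_self _, σ.apply_symm_apply x⟩
    exact ⟨prefix_closed hR hxmem (Or.inr ⟨h2, hx⟩) (by omega), h2⟩

lemma pos_part_eq (hR : IsTypeR a σ) {y : ℕ} (hy : 0 < a y) :
    ((Finset.range (σ.symm y + 1)).image σ).filter (fun z => 0 < a z) =
      (Finset.range (y + 1)).filter (fun z => 0 < a z) := by
  ext z
  simp only [Finset.mem_filter, Finset.mem_range]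
  constructor
  · intro ⟨h1, h2⟩
    exact ⟨Nat.lt_succ_of_le (stage_bound hR h1 (Or.inl ⟨hy, h2⟩)), h2⟩
  · intro ⟨h1, h2⟩
    have hymem : y ∈ (Finset.range (σ.symm y + 1)).image σ := by
      simp only [Finset.mem_image, Finset.mem_range]
      exact ⟨σ.symm y, Nat.lt_succ_self _, σ.apply_symm_apply y⟩
    exact ⟨prefix_closed hR hymem (Or.inl ⟨h2, hy⟩) (by omega), h2⟩

lemma pos_part_eq_max (hR : IsTypeR a σ) {n : ℕ}
    (hne : (((Finset.range (n + 1)).image σ).filter (fun z => 0 < a z)).Nonempty) :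
    ((Finset.range (n + 1)).image σ).filter (fun z => 0 < a z) =
      (Finset.range ((((Finset.range (n + 1)).image σ).filter
        (fun z => 0 < a z)).max' hne + 1)).filter (fun z => 0 < a z) := by
  set T := ((Finset.range (n + 1)).image σ).filter (fun z => 0 < a z) with hT
  set y := T.max' hne with hy
  have hymem : y ∈ T := Finset.max'_mem _ _
  have hyT := hymem
  rw [hT, Finset.mem_filter] at hyT
  ext z
  simp only [Finset.mem_filter, Finset.mem_range]
  constructor
  · intro hz
    refine ⟨Nat.lt_succ_of_le (Finset.le_max' T z ?_), hz.2⟩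
    rw [hT, Finset.mem_filter]
    exact hz
  · intro ⟨h1, h2⟩
    exact ⟨prefix_closed hR hyT.1 (Or.inl ⟨h2, hyT.2⟩) (by omega), h2⟩

end perm

lemma le_blockCount {s W : Finset ℕ} (hsub : W ⊆ s)
    (hw : ∀ w ∈ W, w + 1 ∉ s) : W.card ≤ blockCount s :=
  Finset.card_le_card (fun w hw' => Finset.mem_filter.mpr ⟨hsub hw', hw w hw'⟩)

lemma one_le_of_hasBBN {σ : Equiv.Perm ℕ} {C : ℕ} (hB : HasBBN σ C) : 1 ≤ C := by
  refine le_trans ?_ (hB 0)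
  apply le_blockCount (W := {σ 0}) (by simp)
  intro w hw
  simp only [Finset.mem_singleton] at hw
  subst hw
  simp only [Finset.mem_image, Finset.mem_range]
  rintro ⟨k, hk, hkk⟩
  interval_cases k
  omega


section witness
variable {σ : Equiv.Perm ℕ}
variable (h0 : a 0 ≤ 0) (hP : {n : ℕ | 0 < a n}.Infinite)
  (hN : {n : ℕ | a n ≤ 0}.Infinite)
include h0 hP hN

/-- At the stage where the permutation has produced exactly the nonpositive terms
through the `(b+1)`-st negative block, all positive terms produced so far lie in
the first `b + C` positive blocks. -/
lemma pos_max_bound (hR : IsTypeR a σ) {C : ℕ} (hB : HasBBN σ C) (b : ℕ)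
    (hne : (((Finset.range (σ.symm (Nat.nth (NE a) b) + 1)).image σ).filter
      (fun z => 0 < a z)).Nonempty) :
    (((Finset.range (σ.symm (Nat.nth (NE a) b) + 1)).image σ).filter
      (fun z => 0 < a z)).max' hne ≤ Nat.nth (PE a) (b + C - 1) := by
  have hNEi := NE_infinite h0 hP hN
  have hPEi := PE_infinite h0 hP hN
  have hC1 : 1 ≤ C := one_le_of_hasBBN hB
  obtain ⟨c, rfl⟩ : ∃ c, C = c + 1 := ⟨C - 1, by omega⟩
  set m := Nat.nth (NE a) b with hm
  set n := σ.symm m with hn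
  set T := (Finset.range (n + 1)).image σ with hT
  set y := (T.filter (fun z => 0 < a z)).max' hne with hy
  have hymem : y ∈ T.filter (fun z => 0 < a z) := Finset.max'_mem _ _
  rw [Finset.mem_filter] at hymem
  have hmNE : NE a m := Nat.nth_mem_of_infinite hNEi b
  have hnegeq := neg_part_eq hR (x := m) hmNE.1
  rw [← hn, ← hT] at hnegeq
  by_contra hcon
  push_neg at hcon
  rw [show b + (c + 1) - 1 = b + c by omega] at hcon
  -- witnesses
  have hQy : ∀ t, t ≤ b + c → Nat.nth (PE a) t < y :=
    fun t ht => lt_of_le_of_lt (Nat.nth_monotone hPEi ht) hcon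
  have hQmem : ∀ t, b ≤ t → t ≤ b + c → Nat.nth (PE a) t ∈ T := by
    intro t ht1 ht2
    exact prefix_closed hR hymem.1
      (Or.inl ⟨(Nat.nth_mem_of_infinite hPEi t).1, hymem.2⟩)
      (le_of_lt (hQy t ht2))
  have hmQ : ∀ t, b ≤ t → m < Nat.nth (PE a) t := by
    intro t ht
    calc m ≤ Nat.nth (NE a) t := Nat.nth_monotone hNEi ht
      _ < Nat.nth (PE a) t := NE_lt_PE h0 hP hN t
  have hQsucc : ∀ t, b ≤ t → t ≤ b + c → Nat.nth (PE a) t + 1 ∉ T := by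
    intro t ht1 ht2 hmem
    have hneg : a (Nat.nth (PE a) t + 1) ≤ 0 := (Nat.nth_mem_of_infinite hPEi t).2
    have : Nat.nth (PE a) t + 1 ∈ T.filter (fun z => a z ≤ 0) :=
      Finset.mem_filter.mpr ⟨hmem, hneg⟩
    rw [hnegeq, Finset.mem_filter, Finset.mem_range] at this
    have := hmQ t ht1
    omega
  have hysucc : y + 1 ∉ T := by
    intro hmem
    rcases le_or_gt (a (y + 1)) 0 with h | h
    · have : y + 1 ∈ T.filter (fun z => a z ≤ 0) := Finset.mem_filter.mpr ⟨hmem, h⟩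
      rw [hnegeq, Finset.mem_filter, Finset.mem_range] at this
      have h2 := hmQ (b + c) (by omega)
      have h3 := hQy (b + c) le_rfl
      omega
    · have : y + 1 ∈ T.filter (fun z => 0 < a z) := Finset.mem_filter.mpr ⟨hmem, h⟩
      have := Finset.le_max' _ _ this
      rw [← hy] at this
      omega
  -- assemble witness set
  set W : Finset ℕ := insert y ((Finset.Icc b (b + c)).image (Nat.nth (PE a))) with hW
  have hWsub : W ⊆ T := by
    intro w hw
    rw [hW, Finset.mem_insert] at hw
    rcases hw with h | h
    · subst h; exact hymem.1
    · rw [Finset.mem_image] at h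
      obtain ⟨t, ht, rfl⟩ := h
      rw [Finset.mem_Icc] at ht
      exact hQmem t ht.1 ht.2
  have hWnot : ∀ w ∈ W, w + 1 ∉ T := by
    intro w hw
    rw [hW, Finset.mem_insert] at hw
    rcases hw with h | h
    · subst h; exact hysucc
    · rw [Finset.mem_image] at h
      obtain ⟨t, ht, rfl⟩ := h
      rw [Finset.mem_Icc] at ht
      exact hQsucc t ht.1 ht.2
  have hcard : W.card = c + 2 := by
    rw [hW, Finset.card_insert_of_notMem, Finset.card_image_of_injOn]
    · rw [Nat.card_Icc]; omega
    · exact fun x _ x' _ hxx => Nat.nth_injective hPEi hxx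
    · rw [Finset.mem_image]
      rintro ⟨t, ht, hty⟩
      rw [Finset.mem_Icc] at ht
      exact absurd hty (ne_of_lt (hQy t ht.2))
  have := le_trans (le_blockCount hWsub hWnot) (hB n)
  omega

/-- If all positive terms produced by stage `σ.symm y` lie below `Q u`, then all
nonpositive terms produced lie within the first `K + 1` negative blocks,
provided `u + C ≤ K`. -/
lemma neg_elems_bound (hR : IsTypeR a σ) {C : ℕ} (hB : HasBBN σ C) {y u K : ℕ}
    (hy : 0 < a y) (hyQ : y ≤ Nat.nth (PE a) u) (hK : u + C ≤ K) :
    ∀ z ∈ (Finset.range (σ.symm y + 1)).image σ, a z ≤ 0 → z ≤ Nat.nth (NE a) K := by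
  have hNEi := NE_infinite h0 hP hN
  have hPEi := PE_infinite h0 hP hN
  intro z hzT hza
  by_contra hcon
  push_neg at hcon
  set n := σ.symm y with hn
  set T := (Finset.range (n + 1)).image σ with hT
  have hTne : T.Nonempty := ⟨z, hzT⟩
  have hposeq := pos_part_eq hR (y := y) hy
  rw [← hn, ← hT] at hposeq
  have hEmem : ∀ t, t ≤ K → Nat.nth (NE a) t ∈ T := by
    intro t ht
    exact prefix_closed hR hzT
      (Or.inr ⟨(Nat.nth_mem_of_infinite hNEi t).1, hza⟩)
      (le_of_lt (lt_of_le_of_lt (Nat.nth_monotone hNEi ht) hcon))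
  have hEsucc : ∀ t, u < t → Nat.nth (NE a) t + 1 ∉ T := by
    intro t ht hmem
    have hpos : 0 < a (Nat.nth (NE a) t + 1) := (Nat.nth_mem_of_infinite hNEi t).2
    have : Nat.nth (NE a) t + 1 ∈ T.filter (fun w => 0 < a w) :=
      Finset.mem_filter.mpr ⟨hmem, hpos⟩
    rw [hposeq, Finset.mem_filter, Finset.mem_range] at this
    have h1 : Nat.nth (PE a) u < Nat.nth (NS a) (u + 1) := PE_lt_NS h0 hP hN u
    have h2 : Nat.nth (NS a) (u + 1) ≤ Nat.nth (NE a) (u + 1) := NS_le_NE h0 hP hN (u + 1)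
    have h3 : Nat.nth (NE a) (u + 1) ≤ Nat.nth (NE a) t := Nat.nth_monotone hNEi ht
    omega
  set w := T.max' hTne with hw
  have hwmem : w ∈ T := Finset.max'_mem _ _
  have hwz : z ≤ w := Finset.le_max' _ _ hzT
  have hwsucc : w + 1 ∉ T := fun hmem => by
    have := Finset.le_max' _ _ hmem
    rw [← hw] at this
    omega
  set W : Finset ℕ := insert w ((Finset.Icc (u + 1) K).image (Nat.nth (NE a))) with hW
  have hWsub : W ⊆ T := by
    intro x hx
    rw [hW, Finset.mem_insert] at hx
    rcases hx with h | h
    · subst h; exact hwmem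
    · rw [Finset.mem_image] at h
      obtain ⟨t, ht, rfl⟩ := h
      rw [Finset.mem_Icc] at ht
      exact hEmem t ht.2
  have hWnot : ∀ x ∈ W, x + 1 ∉ T := by
    intro x hx
    rw [hW, Finset.mem_insert] at hx
    rcases hx with h | h
    · subst h; exact hwsucc
    · rw [Finset.mem_image] at h
      obtain ⟨t, ht, rfl⟩ := h
      rw [Finset.mem_Icc] at ht
      exact hEsucc t ht.1
  have hcard : W.card = (K - u) + 1 := by
    rw [hW, Finset.card_insert_of_notMem, Finset.card_image_of_injOn]
    · rw [Nat.card_Icc]; omega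
    · exact fun x _ x' _ hxx => Nat.nth_injective hNEi hxx
    · rw [Finset.mem_image]
      rintro ⟨t, ht, htw⟩
      rw [Finset.mem_Icc] at ht
      have : Nat.nth (NE a) t ≤ Nat.nth (NE a) K := Nat.nth_monotone hNEi ht.2
      omega
  have := le_trans (le_blockCount hWsub hWnot) (hB n)
  omega

end witness


section main
variable (h0 : a 0 ≤ 0) (hP : {n : ℕ | 0 < a n}.Infinite)
  (hN : {n : ℕ | a n ≤ 0}.Infinite)
include h0 hP hN

lemma per_b {σ₁ σ₂ : Equiv.Perm ℕ} {C₁ C₂ : ℕ}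
    (hR₁ : IsTypeR a σ₁) (hB₁ : HasBBN σ₁ C₁)
    (hR₂ : IsTypeR a σ₂) (hB₂ : HasBBN σ₂ C₂) (b : ℕ)
    (hne : (((Finset.range (σ₁.symm (Nat.nth (NE a) b) + 1)).image σ₁).filter
      (fun z => 0 < a z)).Nonempty) :
    SN a (b + 2) (b + 2 * max C₁ C₂) ≤
      partialSum (fun k => a (σ₂ k))
        (σ₂.symm ((((Finset.range (σ₁.symm (Nat.nth (NE a) b) + 1)).image σ₁).filter
          (fun z => 0 < a z)).max' hne) + 1) -
      partialSum (fun k => a (σ₁ k)) (σ₁.symm (Nat.nth (NE a) b) + 1) := by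
  have hNEi := NE_infinite h0 hP hN
  have hC1 : 1 ≤ C₁ := one_le_of_hasBBN hB₁
  have hC2 : 1 ≤ C₂ := one_le_of_hasBBN hB₂
  set Cm := max C₁ C₂ with hCm
  have hCm1 : 1 ≤ Cm := le_trans hC1 (le_max_left _ _)
  set m := Nat.nth (NE a) b with hm
  set n₁ := σ₁.symm m with hn₁
  set T₁ := (Finset.range (n₁ + 1)).image σ₁ with hT₁
  set y := ((T₁.filter (fun z => 0 < a z)).max' hne) with hy
  have hymem : y ∈ T₁.filter (fun z => 0 < a z) := Finset.max'_mem _ _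
  rw [Finset.mem_filter] at hymem
  set n₂ := σ₂.symm y with hn₂
  set T₂ := (Finset.range (n₂ + 1)).image σ₂ with hT₂
  set K := b + 2 * Cm - 1 with hK
  -- the two block-count bounds
  have hyQ : y ≤ Nat.nth (PE a) (b + C₁ - 1) :=
    pos_max_bound h0 hP hN hR₁ hB₁ b hne
  have hzbound : ∀ z ∈ T₂, a z ≤ 0 → z ≤ Nat.nth (NE a) K :=
    neg_elems_bound h0 hP hN hR₂ hB₂ hymem.2 hyQ (by omega)
  -- SN formula
  have hwin : b + 2 * Cm = K + 1 := by omega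
  have hSN : SN a (b + 2) (b + 2 * Cm) =
      G a (Nat.nth (NE a) K + 1) - G a (m + 1) := by
    rw [hwin]
    exact SN_formula h0 hP hN b K (by omega)
  -- sums over stages
  have hsum₁ : partialSum (fun k => a (σ₁ k)) (n₁ + 1) = ∑ z ∈ T₁, a z :=
    sum_stage σ₁ n₁
  have hsum₂ : partialSum (fun k => a (σ₂ k)) (n₂ + 1) = ∑ z ∈ T₂, a z :=
    sum_stage σ₂ n₂
  have hsplit : ∀ T : Finset ℕ, ∑ z ∈ T, a z =
      (∑ z ∈ T.filter (fun z => 0 < a z), a z) +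
      (∑ z ∈ T.filter (fun z => a z ≤ 0), a z) := by
    intro T
    rw [← Finset.sum_filter_add_sum_filter_not T (fun z => 0 < a z)]
    congr 1
    apply Finset.sum_congr _ (fun _ _ => rfl)
    apply Finset.filter_congr
    intro z _
    simp [not_lt]
  -- positive parts agree
  have hpos₁ : T₁.filter (fun z => 0 < a z) =
      (Finset.range (y + 1)).filter (fun z => 0 < a z) := by
    exact pos_part_eq_max hR₁ _
  have hpos₂ : T₂.filter (fun z => 0 < a z) =
      (Finset.range (y + 1)).filter (fun z => 0 < a z) := by
    exact pos_part_eq hR₂ hymem.2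
  -- negative part of stage 1
  have hmNE : NE a m := Nat.nth_mem_of_infinite hNEi b
  have hneg₁ : T₁.filter (fun z => a z ≤ 0) =
      (Finset.range (m + 1)).filter (fun z => a z ≤ 0) := by
    exact neg_part_eq hR₁ hmNE.1
  have hG₁ : ∑ z ∈ T₁.filter (fun z => a z ≤ 0), a z = G a (m + 1) := by
    rw [hneg₁, G, Finset.sum_filter]
  -- negative part of stage 2 dominates G (nth NE K + 1)
  have hG₂ : G a (Nat.nth (NE a) K + 1) ≤ ∑ z ∈ T₂.filter (fun z => a z ≤ 0), a z := by
    apply G_le_sum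
    · intro z hz
      exact (Finset.mem_filter.mp hz).2
    · intro z hz
      rw [Finset.mem_filter] at hz
      rw [Finset.mem_range]
      exact Nat.lt_succ_of_le (hzbound z hz.1 hz.2)
  rw [hSN, hsum₁, hsum₂, hsplit T₁, hsplit T₂, hpos₁, hpos₂, hG₁]
  linarith


lemma key_main {σ₁ σ₂ : Equiv.Perm ℕ} {C₁ C₂ : ℕ} {r₁ r₂ : ℝ}
    (hR₁ : IsTypeR a σ₁) (hB₁ : HasBBN σ₁ C₁)
    (hR₂ : IsTypeR a σ₂) (hB₂ : HasBBN σ₂ C₂)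
    (hr₁ : ConvergesTo (fun n => a (σ₁ n)) r₁)
    (hr₂ : ConvergesTo (fun n => a (σ₂ n)) r₂)
    (hlt : r₂ < r₁) :
    ∃ k₀ : ℕ, ∀ i > k₀,
      SN a (i + 1) (i + 2 * max C₁ C₂ - 1) < -((r₁ - r₂) / 2) := by
  have hC1 : 1 ≤ C₁ := one_le_of_hasBBN hB₁
  have hC2 : 1 ≤ C₂ := one_le_of_hasBBN hB₂
  set δ := (r₁ - r₂) / 2 with hδ
  have hδpos : 0 < δ := by rw [hδ]; linarith
  have hminj : Function.Injective (fun b => σ₁.symm (Nat.nth (NE a) b)) :=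
    fun b b' h => Nat.nth_injective (NE_infinite h0 hP hN) (σ₁.symm.injective h)
  have htm : Tendsto (fun b => σ₁.symm (Nat.nth (NE a) b)) atTop atTop :=
    hminj.nat_tendsto_atTop
  have htm1 : Tendsto (fun b => σ₁.symm (Nat.nth (NE a) b) + 1) atTop atTop :=
    (tendsto_add_atTop_nat 1).comp htm
  have htp1 : Tendsto (fun b => partialSum (fun k => a (σ₁ k))
      (σ₁.symm (Nat.nth (NE a) b) + 1)) atTop (nhds r₁) := hr₁.comp htm1
  set Pn : ℕ → Prop := fun b =>
    (((Finset.range (σ₁.symm (Nat.nth (NE a) b) + 1)).image σ₁).filter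
      (fun z => 0 < a z)).Nonempty with hPn
  set y : ℕ → ℕ := fun b =>
    if h : Pn b then
      ((((Finset.range (σ₁.symm (Nat.nth (NE a) b) + 1)).image σ₁).filter
        (fun z => 0 < a z)).max' h)
    else 0 with hy
  have hev_ne : ∀ K : ℕ, ∀ᶠ b in atTop, Pn b ∧ K ≤ y b := by
    intro K
    obtain ⟨p, hp, hpK⟩ := hP.exists_gt K
    simp only [Set.mem_setOf_eq] at hp
    filter_upwards [htm.eventually_ge_atTop (σ₁.symm p)] with b hb
    have hpT : p ∈ (Finset.range (σ₁.symm (Nat.nth (NE a) b) + 1)).image σ₁ := by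
      simp only [Finset.mem_image, Finset.mem_range]
      exact ⟨σ₁.symm p, by omega, σ₁.apply_symm_apply p⟩
    have hpf : p ∈ (((Finset.range (σ₁.symm (Nat.nth (NE a) b) + 1)).image σ₁).filter
        (fun z => 0 < a z)) := Finset.mem_filter.mpr ⟨hpT, hp⟩
    have hPne : Pn b := ⟨p, hpf⟩
    refine ⟨hPne, ?_⟩
    have : y b = (((Finset.range (σ₁.symm (Nat.nth (NE a) b) + 1)).image σ₁).filter
        (fun z => 0 < a z)).max' hPne := dif_pos hPne
    rw [this]
    exact le_trans (le_of_lt hpK) (Finset.le_max' _ _ hpf)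
  have hty : Tendsto y atTop atTop :=
    tendsto_atTop.mpr (fun K => (hev_ne K).mono (fun b hb => hb.2))
  have htn₂ : Tendsto (fun b => σ₂.symm (y b) + 1) atTop atTop :=
    (tendsto_add_atTop_nat 1).comp
      ((σ₂.symm.injective.nat_tendsto_atTop).comp hty)
  have htp2 : Tendsto (fun b => partialSum (fun k => a (σ₂ k))
      (σ₂.symm (y b) + 1)) atTop (nhds r₂) := hr₂.comp htn₂
  have hev1 : ∀ᶠ b in atTop, r₁ - δ / 2 < partialSum (fun k => a (σ₁ k))
      (σ₁.symm (Nat.nth (NE a) b) + 1) :=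
    htp1.eventually (eventually_gt_nhds (by linarith))
  have hev2 : ∀ᶠ b in atTop, partialSum (fun k => a (σ₂ k))
      (σ₂.symm (y b) + 1) < r₂ + δ / 2 :=
    htp2.eventually (eventually_lt_nhds (by linarith))
  obtain ⟨k₀, hk₀⟩ := eventually_atTop.mp (((hev_ne 0).and (hev1.and hev2)))
  refine ⟨k₀, ?_⟩
  intro i hi
  obtain ⟨b, rfl⟩ : ∃ b, i = b + 1 := ⟨i - 1, by omega⟩
  obtain ⟨⟨hPne, -⟩, h1, h2⟩ := hk₀ b (by omega)
  have hkey := per_b h0 hP hN hR₁ hB₁ hR₂ hB₂ b hPne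
  have hyb : y b = (((Finset.range (σ₁.symm (Nat.nth (NE a) b) + 1)).image σ₁).filter
      (fun z => 0 < a z)).max' hPne := dif_pos hPne
  rw [← hyb] at hkey
  have hwin : b + 1 + 2 * max C₁ C₂ - 1 = b + 2 * max C₁ C₂ := by
    have : 1 ≤ max C₁ C₂ := le_trans hC1 (le_max_left _ _)
    omega
  rw [show b + 1 + 1 = b + 2 from rfl, hwin]
  calc SN a (b + 2) (b + 2 * max C₁ C₂) ≤ _ := hkey
    _ < (r₂ + δ / 2) - (r₁ - δ / 2) := by linarith
    _ = -δ := by rw [hδ]; ring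

end main

end St5

/-- If `σ₁, σ₂` are type R λ-permutations with bounded block
numbers `C₁, C₂` rearranging the series to `r₁ > r₂`, then with `C = max C₁ C₂`
there is `k₀` such that `S_{[N_{i+1},N_{i+2C−1}]} < −(r₁ − r₂)/2` for all
`i > k₀`; in particular the series satisfies `ST_N`. -/
theorem statement5 (a : ℕ → ℝ) (h0 : a 0 ≤ 0)
    (hP : {n : ℕ | 0 < a n}.Infinite) (hN : {n : ℕ | a n ≤ 0}.Infinite)
    (σ₁ σ₂ : Equiv.Perm ℕ) (C₁ C₂ : ℕ) (r₁ r₂ : ℝ)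
    (hR₁ : IsTypeR a σ₁) (hB₁ : HasBBN σ₁ C₁)
    (hR₂ : IsTypeR a σ₂) (hB₂ : HasBBN σ₂ C₂)
    (hr₁ : ConvergesTo (fun n => a (σ₁ n)) r₁)
    (hr₂ : ConvergesTo (fun n => a (σ₂ n)) r₂)
    (hlt : r₂ < r₁) :
    (∃ k₀ : ℕ, ∀ i > k₀,
      SN a (i + 1) (i + 2 * max C₁ C₂ - 1) < -((r₁ - r₂) / 2)) ∧ STN a := by
  obtain ⟨k₀, hk₀⟩ := St5.key_main h0 hP hN hR₁ hB₁ hR₂ hB₂ hr₁ hr₂ hlt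
  refine ⟨⟨k₀, hk₀⟩, ?_⟩
  refine ⟨2 * max C₁ C₂ - 2, (r₁ - r₂) / 2, by linarith, k₀ + 1, ?_⟩
  intro i hi
  obtain ⟨b, rfl⟩ : ∃ b, i = b + 2 := ⟨i - 2, by omega⟩
  have h := hk₀ (b + 1) (by omega)
  have hC1 : 1 ≤ max C₁ C₂ := le_trans (St5.one_le_of_hasBBN hB₁) (le_max_left _ _)
  have e1 : b + 1 + 1 = b + 2 := by omega
  rw [e1] at h
  have harith : b + 2 + (2 * max C₁ C₂ - 2) = b + 1 + 2 * max C₁ C₂ - 1 := by omega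
  rw [harith]
  linarith
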